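/- Let κ be an infinite cardinal. If there exists a Kurepa tree on κ⁺ (a κ⁺-tree all of whose levels have cardinality at most κ and which has at least κ⁺⁺ many cofinal branches), then the polarized partition relation (κ⁺⁺, κ⁺) → (2, κ⁺)_κ fails; that is, there exists a coloring c : κ⁺⁺ × κ⁺ → κ such that for every A ⊆ κ⁺⁺ with |A| = 2 and every B ⊆ κ⁺ with |B| = κ⁺, the restriction of c to A × B is not constant. -/

import Mathlib

open Cardinal Set

noncomputable section

namespace GK

/-- The restriction of a function on ordinals to the domain `β` (zero outside of it). -/
def restrict (t : Ordinal → Ordinal) (β : Ordinal) : Ordinal → Ordinal :=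
  fun α => if α < β then t α else 0

/-- `T` is a tree on the cardinal `κ`: a set of (normalized) functions `t : β → κ`,
`β < κ`, closed under restriction to smaller ordinals. -/
def IsTreeOn (κ : Cardinal.{0}) (T : Set (Ordinal × (Ordinal → Ordinal))) : Prop :=
  (∀ p ∈ T, p.1 < κ.ord ∧ (∀ α, p.2 α < κ.ord) ∧ p.2 = restrict p.2 p.1) ∧
  (∀ p ∈ T, ∀ γ < p.1, (γ, restrict p.2 γ) ∈ T)

/-- The `β`-th level of the tree `T`: the functions in `T` with domain `β`. -/
def level (T : Set (Ordinal × (Ordinal → Ordinal))) (β : Ordinal) :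
    Set (Ordinal → Ordinal) := {t | (β, t) ∈ T}

/-- The set of cofinal branches of a tree `T` on `κ`: (normalized) functions `b : κ → κ`
all of whose restrictions to `β < κ` belong to `T`. -/
def branches (κ : Cardinal.{0}) (T : Set (Ordinal × (Ordinal → Ordinal))) :
    Set (Ordinal → Ordinal) :=
  {b | b = restrict b κ.ord ∧ ∀ β < κ.ord, (β, restrict b β) ∈ T}

/-- `T` is a `κ`-tree: a tree on `κ` all of whose levels below `κ` are nonempty. -/
def IsKappaTree (κ : Cardinal.{0}) (T : Set (Ordinal × (Ordinal → Ordinal))) : Prop :=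
  IsTreeOn κ T ∧ ∀ β < κ.ord, (level T β).Nonempty

/-- `C` is a closed unbounded subset of the ordinal `o`. -/
def IsClubIn (C : Set Ordinal) (o : Ordinal) : Prop :=
  C ⊆ Set.Iio o ∧
  (∀ α < o, ∃ β ∈ C, α < β) ∧
  (∀ δ, δ < o → 0 < δ → (∀ α < δ, ∃ β ∈ C, α < β ∧ β < δ) → δ ∈ C)

/-- `S` is a stationary subset of the ordinal `o`: it meets every club of `o`. -/
def IsStationaryIn (S : Set Ordinal) (o : Ordinal) : Prop :=
  ∀ C, IsClubIn C o → (S ∩ C).Nonempty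

/-- `U` is an ultrafilter over the cardinal `κ` (realized as the set of
ordinals below `κ.ord`). -/
def IsUltrafilterOn (κ : Cardinal.{0}) (U : Set (Set Ordinal)) : Prop :=
  (∀ A ∈ U, A ⊆ Set.Iio κ.ord) ∧
  Set.Iio κ.ord ∈ U ∧
  ∅ ∉ U ∧
  (∀ A B : Set Ordinal, A ∈ U → A ⊆ B → B ⊆ Set.Iio κ.ord → B ∈ U) ∧
  (∀ A B : Set Ordinal, A ∈ U → B ∈ U → A ∩ B ∈ U) ∧
  (∀ A : Set Ordinal, A ⊆ Set.Iio κ.ord → A ∈ U ∨ Set.Iio κ.ord \ A ∈ U)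

/-- `U` is σ-complete: closed under countable intersections. -/
def SigmaComplete (U : Set (Set Ordinal)) : Prop :=
  ∀ f : ℕ → Set Ordinal, (∀ n, f n ∈ U) → (⋂ n, f n) ∈ U

/-- `U` is `κ`-complete: closed under intersections of fewer than `κ` many sets. -/
def KappaComplete (κ : Cardinal.{0}) (U : Set (Set Ordinal)) : Prop :=
  ∀ (ι : Type) (f : ι → Set Ordinal), #ι < κ → (∀ i, f i ∈ U) →
    (Set.Iio κ.ord ∩ ⋂ i, f i) ∈ U

/-- The Galvin property `Gal(U, κ, κ⁺)`: for every family of `κ⁺` many sets in `U`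
there is a subfamily of `κ` many of them whose intersection is in `U`. -/
def Galvin (κ : Cardinal.{0}) (U : Set (Set Ordinal)) : Prop :=
  ∀ C : Ordinal → Set Ordinal, (∀ α < (Order.succ κ).ord, C α ∈ U) →
    ∃ A : Set Ordinal, A ⊆ Set.Iio (Order.succ κ).ord ∧ #A = Cardinal.lift.{1} κ ∧
      (⋂ α ∈ A, C α) ∈ U

/-- If there is a Kurepa tree on `κ⁺` (levels of size `≤ κ`, at least
`κ⁺⁺` branches), then the polarized relation `(κ⁺⁺, κ⁺) → (2, κ⁺)_κ` fails. -/
theorem kurepa_tree_negative_polarized_relation_successor (κ : Cardinal.{0})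
    (hκ : ℵ₀ ≤ κ)
    (T : Set (Ordinal × (Ordinal → Ordinal)))
    (hT : IsKappaTree (Order.succ κ) T)
    (hlev : ∀ β < (Order.succ κ).ord, #(level T β) ≤ Cardinal.lift.{1} κ)
    (hbr : Cardinal.lift.{1} (Order.succ (Order.succ κ)) ≤ #(branches (Order.succ κ) T)) :
    ∃ c : Ordinal → Ordinal → Ordinal, (∀ α β : Ordinal, c α β < κ.ord) ∧
      ∀ A : Set Ordinal, A ⊆ Set.Iio (Order.succ (Order.succ κ)).ord → #A = 2 →
      ∀ B : Set Ordinal, B ⊆ Set.Iio (Order.succ κ).ord →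
        #B = Cardinal.lift.{1} (Order.succ κ) →
      ¬ ∃ i : Ordinal, ∀ α ∈ A, ∀ β ∈ B, c α β = i := by
  classical
  have hκpos : (0 : Ordinal) < κ.ord := by
    calc (0 : Ordinal) < Ordinal.omega0 := Ordinal.omega0_pos
    _ = (ℵ₀ : Cardinal).ord := (Cardinal.ord_aleph0).symm
    _ ≤ κ.ord := Cardinal.ord_le_ord.mpr hκ
  obtain ⟨f⟩ : Nonempty (Set.Iio (Order.succ (Order.succ κ)).ord ↪ branches (Order.succ κ) T) := by
    rw [← Cardinal.le_def, Ordinal.mk_Iio_ordinal, Cardinal.card_ord]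
    exact hbr
  have hg : ∀ β : Ordinal, β < (Order.succ κ).ord →
      Nonempty ((level T β) ↪ Set.Iio κ.ord) := by
    intro β hβ
    rw [← Cardinal.le_def, Ordinal.mk_Iio_ordinal, Cardinal.card_ord]
    exact hlev β hβ
  let g : ∀ β : Ordinal, β < (Order.succ κ).ord → ((level T β) ↪ Set.Iio κ.ord) :=
    fun β hβ => (hg β hβ).some
  have hmem : ∀ (b : branches (Order.succ κ) T) (β : Ordinal), β < (Order.succ κ).ord →
      restrict (b : Ordinal → Ordinal) β ∈ level T β := fun b β hβ => b.2.2 β hβ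
  let c : Ordinal → Ordinal → Ordinal := fun α β =>
    if h : α < (Order.succ (Order.succ κ)).ord ∧ β < (Order.succ κ).ord then
      (g β h.2 ⟨restrict (f ⟨α, h.1⟩ : Ordinal → Ordinal) β, hmem _ β h.2⟩ : Ordinal)
    else 0
  refine ⟨c, ?_, ?_⟩
  · intro α β
    simp only [c]
    split_ifs with h
    · exact ((g β h.2) ⟨restrict (f ⟨α, h.1⟩ : Ordinal → Ordinal) β, hmem _ β h.2⟩).2
    · exact hκpos
  intro A hA hA2 B hB hBcard
  rintro ⟨i, hi⟩
  have hnt : (A : Set Ordinal).Nontrivial := by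
    rw [← Set.nontrivial_coe_sort, ← Cardinal.one_lt_iff_nontrivial, hA2]
    exact one_lt_two
  obtain ⟨a, ha, a', ha', hne⟩ := hnt
  set b1 := f ⟨a, hA ha⟩ with hb1
  set b2 := f ⟨a', hA ha'⟩ with hb2
  have hbne : (b1 : Ordinal → Ordinal) ≠ (b2 : Ordinal → Ordinal) := by
    intro h
    exact hne (congrArg Subtype.val (f.injective (Subtype.ext h)))
  obtain ⟨ξ, hξ⟩ := Function.ne_iff.mp hbne
  have hξlt : ξ < (Order.succ κ).ord := by
    by_contra hle
    apply hξ
    have e1 := congrFun b1.2.1 ξ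
    have e2 := congrFun b2.2.1 ξ
    rw [restrict, if_neg hle] at e1 e2
    rw [e1, e2]
  -- find β ∈ B with ξ < β
  obtain ⟨β, hβB, hξβ⟩ : ∃ β ∈ B, ξ < β := by
    by_contra hall
    push_neg at hall
    have hsub : B ⊆ Set.Iic ξ := fun x hx => hall x hx
    have h1 : #B ≤ #(Set.Iic ξ) := Cardinal.mk_le_mk_of_subset hsub
    rw [← Order.Iio_succ, Ordinal.mk_Iio_ordinal, hBcard] at h1
    have h2 : Order.succ ξ < (Order.succ κ).ord :=
      (Cardinal.isSuccLimit_ord (hκ.trans (Order.le_succ κ))).succ_lt hξlt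
    have h3 : (Order.succ ξ : Ordinal).card < Order.succ κ := Cardinal.lt_ord.mp h2
    exact absurd (Cardinal.lift_le.mp h1) (not_le.mpr h3)
  have hβlt : β < (Order.succ κ).ord := hB hβB
  have halt : a < (Order.succ (Order.succ κ)).ord := hA ha
  have halt' : a' < (Order.succ (Order.succ κ)).ord := hA ha'
  have e1 : c a β = i := hi a ha β hβB
  have e2 : c a' β = i := hi a' ha' β hβB
  have d1 : c a β = (g β hβlt ⟨restrict (b1 : Ordinal → Ordinal) β, hmem _ β hβlt⟩ : Ordinal) := by
    simp only [c, dif_pos (And.intro halt hβlt)]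
    rfl
  have d2 : c a' β = (g β hβlt ⟨restrict (b2 : Ordinal → Ordinal) β, hmem _ β hβlt⟩ : Ordinal) := by
    simp only [c, dif_pos (And.intro halt' hβlt)]
    rfl
  have heq : restrict (b1 : Ordinal → Ordinal) β = restrict (b2 : Ordinal → Ordinal) β := by
    have hv : (g β hβlt ⟨restrict (b1 : Ordinal → Ordinal) β, hmem _ β hβlt⟩ : Ordinal)
        = (g β hβlt ⟨restrict (b2 : Ordinal → Ordinal) β, hmem _ β hβlt⟩ : Ordinal) := by
      rw [← d1, ← d2, e1, e2]
    have := (g β hβlt).injective (Subtype.ext hv)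
    exact congrArg Subtype.val this
  apply hξ
  have := congrFun heq ξ
  rwa [restrict, restrict, if_pos hξβ, if_pos hξβ] at this

end GK
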